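/- arXiv:1403.5381 — 7 statements merged into one kernel-verified Lean document; each statement's English description precedes it below -/
import Mathlib

section
/- Let X be a binomially distributed random variable with parameters K and p (the number of successes in K independent Bernoulli trials with success probability p), and let L > 0 be a real number such that K·p ≥ 4·L. Then Pr[X < L] ≤ exp(−9·L/8); in particular, if L = ln(N) for a real N ≥ 3, then Pr[X < ln(N)] ≤ 1/N. -/
/-- Lower-tail bound for a binomial random variable `X ~ Binomial(K, p)`:
if `K·p ≥ 4·L` for a real `L > 0`, then
`Pr[X < L] = ∑_{i < L} C(K,i) pⁱ (1-p)^{K-i} ≤ exp (-9L/8)`;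
in particular, if `L = ln N` with `N ≥ 3`, then `Pr[X < ln N] ≤ 1/N`. -/
theorem binomial_lower_tail (K : ℕ) (hK : 0 < K) (p : ℝ) (hp0 : 0 ≤ p) (hp1 : p ≤ 1)
    (L : ℝ) (hL : 0 < L) (hKp : 4 * L ≤ (K : ℝ) * p) :
    (∑ i ∈ Finset.range (K + 1),
        if (i : ℝ) < L then (K.choose i : ℝ) * p ^ i * (1 - p) ^ (K - i) else 0)
      ≤ Real.exp (-(9 * L) / 8)
    ∧ ∀ N : ℝ, 3 ≤ N → L = Real.log N →
        (∑ i ∈ Finset.range (K + 1),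
            if (i : ℝ) < L then (K.choose i : ℝ) * p ^ i * (1 - p) ^ (K - i) else 0)
          ≤ 1 / N := by
  have hq0 : (0:ℝ) ≤ 1 - p := by linarith
  have hlog4 : Real.log 4 ≤ 15/8 := by
    have h2 := Real.log_two_lt_d9
    have : (4:ℝ) = 2 * 2 := by norm_num
    rw [this, Real.log_mul (by norm_num) (by norm_num)]
    linarith
  have key : (∑ i ∈ Finset.range (K + 1),
        if (i : ℝ) < L then (K.choose i : ℝ) * p ^ i * (1 - p) ^ (K - i) else 0)
      ≤ Real.exp (-(9 * L) / 8) := by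
    have step1 : (∑ i ∈ Finset.range (K + 1),
        if (i : ℝ) < L then (K.choose i : ℝ) * p ^ i * (1 - p) ^ (K - i) else 0)
        ≤ (4:ℝ) ^ L * ∑ i ∈ Finset.range (K + 1),
            (p/4) ^ i * (1 - p) ^ (K - i) * (K.choose i : ℝ) := by
      rw [Finset.mul_sum]
      apply Finset.sum_le_sum
      intro i _
      have hterm : (0:ℝ) ≤ (K.choose i : ℝ) * p ^ i * (1 - p) ^ (K - i) := by positivity
      split_ifs with h
      · have heq : (4:ℝ) ^ L * ((p/4) ^ i * (1 - p) ^ (K - i) * (K.choose i : ℝ))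
            = (4:ℝ) ^ (L - (i:ℝ)) * ((K.choose i : ℝ) * p ^ i * (1 - p) ^ (K - i)) := by
          rw [Real.rpow_sub (by norm_num : (0:ℝ) < 4), div_pow,
            ← Real.rpow_natCast (4:ℝ) i]
          ring
        rw [heq]
        have h1 : (1:ℝ) ≤ (4:ℝ) ^ (L - (i:ℝ)) := by
          rw [show (1:ℝ) = (4:ℝ) ^ (0:ℝ) by simp]
          exact Real.rpow_le_rpow_of_exponent_le (by norm_num) (by linarith)
        exact le_mul_of_one_le_left hterm h1
      · positivity
    have step2 : (∑ i ∈ Finset.range (K + 1),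
          (p/4) ^ i * (1 - p) ^ (K - i) * (K.choose i : ℝ))
        = (1 - 3*p/4) ^ K := by
      rw [← add_pow]
      ring_nf
    have step3 : (1 - 3*p/4) ^ K ≤ Real.exp (-(3 * K * p / 4)) := by
      calc (1 - 3*p/4) ^ K ≤ (Real.exp (-(3*p/4))) ^ K := by
            apply pow_le_pow_left₀ (by linarith)
            have := Real.add_one_le_exp (-(3*p/4))
            linarith
        _ = Real.exp (-(3 * K * p / 4)) := by
            rw [← Real.exp_nat_mul]; ring_nf
    have step4 : (4:ℝ) ^ L * (1 - 3*p/4) ^ K ≤ Real.exp (-(9 * L) / 8) := by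
      have h4L : (4:ℝ) ^ L = Real.exp (Real.log 4 * L) :=
        Real.rpow_def_of_pos (by norm_num) L
      calc (4:ℝ) ^ L * (1 - 3*p/4) ^ K
          ≤ Real.exp (Real.log 4 * L) * Real.exp (-(3 * K * p / 4)) := by
            rw [h4L]
            exact mul_le_mul_of_nonneg_left step3 (Real.exp_nonneg _)
        _ = Real.exp (Real.log 4 * L - 3 * K * p / 4) := by
            rw [← Real.exp_add]; ring_nf
        _ ≤ Real.exp (-(9 * L) / 8) := by
            apply Real.exp_le_exp.mpr
            nlinarith [hL.le, hlog4, hKp]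
    calc (∑ i ∈ Finset.range (K + 1),
        if (i : ℝ) < L then (K.choose i : ℝ) * p ^ i * (1 - p) ^ (K - i) else 0)
        ≤ (4:ℝ) ^ L * ∑ i ∈ Finset.range (K + 1),
            (p/4) ^ i * (1 - p) ^ (K - i) * (K.choose i : ℝ) := step1
      _ = (4:ℝ) ^ L * (1 - 3*p/4) ^ K := by rw [step2]
      _ ≤ Real.exp (-(9 * L) / 8) := step4
  refine ⟨key, ?_⟩
  intro N hN hLN
  have hN0 : (0:ℝ) < N := by linarith
  calc (∑ i ∈ Finset.range (K + 1),
        if (i : ℝ) < L then (K.choose i : ℝ) * p ^ i * (1 - p) ^ (K - i) else 0)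
      ≤ Real.exp (-(9 * L) / 8) := key
    _ = N ^ (-(9:ℝ)/8) := by
        rw [Real.rpow_def_of_pos hN0, hLN]; ring_nf
    _ ≤ N ^ (-1:ℝ) :=
        Real.rpow_le_rpow_of_exponent_le (by linarith) (by norm_num)
    _ = 1 / N := by rw [Real.rpow_neg_one, one_div]
end

section
/- Let m ≥ 1 and t ≥ 4 be integers and set n = m·t. Let C ⊆ {1, ..., n} be a nonempty set of positions such that for every integer j with 0 ≤ j ≤ t−4, C intersects the window {j·m + 1, j·m + 2, ..., j·m + 4m}. Then any two consecutive elements of C ∪ {0, n} (i.e., any two elements of C ∪ {0, n} with no element of C strictly between them) differ by at most 5m + 1. -/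
/-- Sliding-bucket claim in the Terasort analysis: let `n = m·t` with `m ≥ 1`,
`t ≥ 4`, and let `C ⊆ {1, ..., n}` be a nonempty set of positions meeting every
window `{j·m + 1, ..., j·m + 4m}` for `0 ≤ j ≤ t - 4`.  Then any two consecutive
elements of `C ∪ {0, n}` (two elements with no element of `C` strictly between
them) differ by at most `5m + 1`. -/
theorem sliding_buckets (m t : ℕ) (hm : 1 ≤ m) (ht : 4 ≤ t) (n : ℕ) (hn : n = m * t)
    (C : Finset ℕ) (hCne : C.Nonempty) (hCsub : ∀ c ∈ C, 1 ≤ c ∧ c ≤ n)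
    (hwin : ∀ j : ℕ, j ≤ t - 4 → ∃ c ∈ C, j * m + 1 ≤ c ∧ c ≤ j * m + 4 * m) :
    ∀ x ∈ insert 0 (insert n C), ∀ y ∈ insert 0 (insert n C),
      x < y → (∀ c ∈ C, ¬(x < c ∧ c < y)) → y - x ≤ 5 * m + 1 := by
  intro x hx y hy hxy hno
  by_contra hlt
  push_neg at hlt
  have hyn : y ≤ n := by
    rcases Finset.mem_insert.mp hy with h | h
    · omega
    · rcases Finset.mem_insert.mp h with h | h
      · omega
      · exact (hCsub y h).2
  -- pick q = ⌈x/m⌉, so that x ≤ q*m ≤ x + m - 1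
  obtain ⟨q, r, hr, hd⟩ : ∃ q r, r < m ∧ x + (m - 1) = m * q + r :=
    ⟨_, _, Nat.mod_lt _ (by omega), (Nat.div_add_mod _ m).symm⟩
  have hqm : m * q = q * m := Nat.mul_comm m q
  have hx1 : x ≤ q * m := by omega
  have hx2 : q * m ≤ x + m - 1 := by omega
  have key : x + 5 * m + 2 ≤ m * t := by omega
  have h5 : q * m < (t - 3) * m := by
    have hsub := Nat.sub_mul t 3 m
    have hcomm : t * m = m * t := Nat.mul_comm t m
    omega
  have hqt : q < t - 3 := Nat.lt_of_mul_lt_mul_right h5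
  obtain ⟨c, hc, hc1, hc2⟩ := hwin q (by omega)
  exact hno c hc ⟨by omega, by omega⟩
end

section
/- Let s ≥ 1 and q ≥ 2 be integers and set m = s·q. Let A be a set of m distinct real numbers with increasing enumeration a_1 < a_2 < ... < a_m. Define the sample points λ_0 = a_1 and λ_j = a_{j·q} for 1 ≤ j ≤ s, and for a half-open interval [b, b') with b < b' define the estimated count est(b, b') = Σ_{j=0}^{s−1} q · len([b, b') ∩ [λ_j, λ_{j+1})) / (λ_{j+1} − λ_j), where len denotes the length (Lebesgue measure) of an interval. Then for all reals b < b', the actual count satisfies |A ∩ [b, b')| ≤ est(b, b') + 2q + 1. -/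
/-- Per-machine error bound in the SMMS workload analysis: let `m = s·q` with
`s ≥ 1`, `q ≥ 2`, let `a : Fin m → ℝ` be the increasing enumeration of a set `A`
of `m` distinct reals, and let `λ 0 = a 1` and `λ j` be the `(j·q)`-th smallest
element for `1 ≤ j ≤ s`.  For any half-open interval `[b, b')`, the actual count
`|A ∩ [b, b')|` is at most the estimated count
`∑_{j<s} q · len([b, b') ∩ [λ j, λ (j+1))) / (λ (j+1) - λ j)` plus `2q + 1`. -/
theorem smms_local_error (s q : ℕ) (hs : 1 ≤ s) (hq : 2 ≤ q) (m : ℕ) (hm : m = s * q)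
    (a : Fin m → ℝ) (ha : StrictMono a)
    (lam : ℕ → ℝ)
    (hlam0 : lam 0 = a ⟨0, by subst hm; exact Nat.mul_pos (by omega) (by omega)⟩)
    (hlamj : ∀ j, (hj1 : 1 ≤ j) → (hj2 : j ≤ s) → lam j =
        a ⟨j * q - 1, by
            subst hm
            exact lt_of_lt_of_le
              (Nat.sub_lt (Nat.mul_pos (by omega) (by omega)) (by omega))
              (Nat.mul_le_mul_right q hj2)⟩)
    (b b' : ℝ) (hbb' : b < b') :
    ((Finset.univ.filter (fun i : Fin m => b ≤ a i ∧ a i < b')).card : ℝ)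
      ≤ (∑ j ∈ Finset.range s,
          (q : ℝ) * (MeasureTheory.volume
              (Set.Ico b b' ∩ Set.Ico (lam j) (lam (j + 1)))).toReal
            / (lam (j + 1) - lam j))
        + 2 * q + 1 := by
  classical
  subst hm
  have hm0 : 0 < s * q := Nat.mul_pos (by omega) (by omega)
  -- index facts
  have hidx : ∀ j, 1 ≤ j → j ≤ s → j * q - 1 < s * q := fun j h1 h2 =>
    lt_of_lt_of_le (Nat.sub_lt (Nat.mul_pos (by omega) (by omega)) (by omega))
      (Nat.mul_le_mul_right q h2)
  -- lam is strictly increasing on [0, s]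
  have hlam_lt : ∀ j, j < s → lam j < lam (j + 1) := by
    intro j hj
    rcases Nat.eq_zero_or_pos j with rfl | hj1
    · rw [hlam0, hlamj 1 le_rfl hs]
      exact ha (by simp [Fin.lt_def]; omega)
    · rw [hlamj j hj1 (le_of_lt hj), hlamj (j + 1) (by omega) hj]
      apply ha
      simp only [Fin.mk_lt_mk]
      have h1 : j * q + q = (j + 1) * q := by ring
      have h2 : 1 * q ≤ j * q := Nat.mul_le_mul_right q hj1
      omega
  have hlam_mono : ∀ j k, j ≤ k → k ≤ s → lam j ≤ lam k := by
    intro j k hjk hks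
    induction k, hjk using Nat.le_induction with
    | base => exact le_rfl
    | succ k hk ih =>
        exact le_trans (ih (by omega)) (le_of_lt (hlam_lt k (by omega)))
  -- per-bucket counting bound
  have bucket_card : ∀ j, j < s →
      (Finset.univ.filter (fun i : Fin (s * q) =>
        lam j ≤ a i ∧ a i < lam (j + 1))).card ≤ q := by
    intro j hj
    have hkey : ∀ i : Fin (s * q), lam j ≤ a i → a i < lam (j + 1) →
        i.val ∈ Finset.Ico (j * q - 1) ((j + 1) * q - 1) := by
      intro i h1 h2
      rw [hlamj (j + 1) (by omega) hj] at h2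
      have hu : i.val < (j + 1) * q - 1 := by
        have := ha.lt_iff_lt.mp h2
        simpa [Fin.lt_def] using this
      have hl : j * q - 1 ≤ i.val := by
        rcases Nat.eq_zero_or_pos j with rfl | hj1
        · omega
        · rw [hlamj j hj1 (le_of_lt hj)] at h1
          have := ha.le_iff_le.mp h1
          simpa [Fin.le_def] using this
      exact Finset.mem_Ico.mpr ⟨hl, hu⟩
    calc (Finset.univ.filter (fun i : Fin (s * q) =>
        lam j ≤ a i ∧ a i < lam (j + 1))).card
        ≤ (Finset.Ico (j * q - 1) ((j + 1) * q - 1)).card := by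
          apply Finset.card_le_card_of_injOn (fun i => i.val)
          · intro i hi
            simp only [Finset.mem_coe, Finset.mem_filter] at hi
            exact hkey i hi.2.1 hi.2.2
          · intro i _ k _ h
            exact Fin.val_injective h
      _ ≤ q := by
          rw [Nat.card_Ico]
          have h1 : j * q + q = (j + 1) * q := by ring
          omega
  -- locating a bucket for a point
  have find_bucket : ∀ (x : ℝ) (n : ℕ), lam 0 ≤ x → x < lam n →
      ∃ j, j < n ∧ lam j ≤ x ∧ x < lam (j + 1) := by
    intro x n h0 hn
    induction n with
    | zero => exact absurd hn (not_lt.mpr h0)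
    | succ n ih =>
        by_cases hx : x < lam n
        · obtain ⟨j, h1, h2, h3⟩ := ih hx
          exact ⟨j, by omega, h2, h3⟩
        · exact ⟨n, by omega, not_lt.mp hx, hn⟩
  -- the pieces
  set T := Finset.univ.filter (fun i : Fin (s * q) => b ≤ a i ∧ a i < b') with hT
  set B := fun j => Finset.univ.filter (fun i : Fin (s * q) =>
      (b ≤ a i ∧ a i < b') ∧ lam j ≤ a i ∧ a i < lam (j + 1)) with hB
  set last : Fin (s * q) := ⟨s * q - 1, by omega⟩ with hlast
  have hsub : T ⊆ (Finset.range s).biUnion B ∪ {last} := by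
    intro i hi
    simp only [hT, Finset.mem_filter, Finset.mem_univ, true_and] at hi
    by_cases hx : a i < lam s
    · have h0 : lam 0 ≤ a i := by
        rw [hlam0]
        exact ha.monotone (by simp [Fin.le_def])
      obtain ⟨j, hj1, hj2, hj3⟩ := find_bucket (a i) s h0 hx
      apply Finset.mem_union_left
      simp only [Finset.mem_biUnion, Finset.mem_range]
      exact ⟨j, hj1, by simp [hB, hi, hj2, hj3]⟩
    · apply Finset.mem_union_right
      push_neg at hx
      rw [hlamj s hs le_rfl] at hx
      have : (s * q - 1 : ℕ) ≤ i.val := by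
        have := ha.le_iff_le.mp hx
        simpa [Fin.le_def] using this
      have : i = last := by
        apply Fin.ext
        simp only [hlast]
        omega
      simp [this]
  have hcard1 : (T.card : ℝ) ≤ (∑ j ∈ Finset.range s, ((B j).card : ℝ)) + 1 := by
    have h1 : T.card ≤ ((Finset.range s).biUnion B).card + 1 := by
      calc T.card ≤ ((Finset.range s).biUnion B ∪ {last}).card :=
            Finset.card_le_card hsub
        _ ≤ ((Finset.range s).biUnion B).card + ({last} : Finset (Fin (s*q))).card :=
            Finset.card_union_le _ _
        _ = ((Finset.range s).biUnion B).card + 1 := by simp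
    have h2 : ((Finset.range s).biUnion B).card ≤ ∑ j ∈ Finset.range s, (B j).card :=
      Finset.card_biUnion_le
    have := le_trans h1 (by omega : ((Finset.range s).biUnion B).card + 1 ≤
      (∑ j ∈ Finset.range s, (B j).card) + 1)
    calc (T.card : ℝ) ≤ ((∑ j ∈ Finset.range s, (B j).card : ℕ) : ℝ) + 1 := by
          exact_mod_cast this
      _ = (∑ j ∈ Finset.range s, ((B j).card : ℝ)) + 1 := by push_cast; ring
  -- per-bucket estimate
  have term_nonneg : ∀ j, j < s → 0 ≤ (q : ℝ) * (MeasureTheory.volume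
      (Set.Ico b b' ∩ Set.Ico (lam j) (lam (j + 1)))).toReal / (lam (j + 1) - lam j) := by
    intro j hj
    apply div_nonneg
    · exact mul_nonneg (by positivity) ENNReal.toReal_nonneg
    · linarith [hlam_lt j hj]
  have perj : ∀ j ∈ Finset.range s, ((B j).card : ℝ) ≤
      (q : ℝ) * (MeasureTheory.volume
          (Set.Ico b b' ∩ Set.Ico (lam j) (lam (j + 1)))).toReal / (lam (j + 1) - lam j)
      + (if lam j < b ∧ b < lam (j + 1) then (q : ℝ) else 0)
      + (if lam j < b' ∧ b' < lam (j + 1) then (q : ℝ) else 0) := by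
    intro j hjr
    have hj : j < s := Finset.mem_range.mp hjr
    have hBq : ((B j).card : ℝ) ≤ q := by
      have hss : B j ⊆ Finset.univ.filter (fun i : Fin (s * q) =>
          lam j ≤ a i ∧ a i < lam (j + 1)) := by
        intro i hi
        simp only [hB, Finset.mem_filter, Finset.mem_univ, true_and] at hi ⊢
        exact hi.2
      have : (B j).card ≤ q := le_trans (Finset.card_le_card hss) (bucket_card j hj)
      exact_mod_cast this
    have htn := term_nonneg j hj
    by_cases hcb : lam j < b ∧ b < lam (j + 1)
    · have h2 : (0 : ℝ) ≤ (if lam j < b' ∧ b' < lam (j + 1) then (q : ℝ) else 0) := by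
        split <;> positivity
      simp only [if_pos hcb]
      linarith
    · by_cases hcb' : lam j < b' ∧ b' < lam (j + 1)
      · have h2 : (0 : ℝ) ≤ (if lam j < b ∧ b < lam (j + 1) then (q : ℝ) else 0) := by
          split <;> positivity
        simp only [if_pos hcb']
        linarith
      · have h1 : (0 : ℝ) ≤ (if lam j < b ∧ b < lam (j + 1) then (q : ℝ) else 0) := by
          split <;> positivity
        have h2 : (0 : ℝ) ≤ (if lam j < b' ∧ b' < lam (j + 1) then (q : ℝ) else 0) := by
          split <;> positivity
        by_cases he1 : b' ≤ lam j
        · have : B j = ∅ := by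
            apply Finset.filter_eq_empty_iff.mpr
            intro i _
            intro hcon
            obtain ⟨⟨_, hib'⟩, hil, _⟩ := hcon
            linarith
          simp only [this, Finset.card_empty, Nat.cast_zero]
          linarith
        · by_cases he2 : lam (j + 1) ≤ b
          · have : B j = ∅ := by
              apply Finset.filter_eq_empty_iff.mpr
              intro i _
              intro hcon
              obtain ⟨⟨hib, _⟩, _, hiu⟩ := hcon
              linarith
            simp only [this, Finset.card_empty, Nat.cast_zero]
            linarith
          · push_neg at he1 he2
            have hble : b ≤ lam j := by
              by_contra h
              push_neg at h
              exact hcb ⟨h, he2⟩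
            have hb'ge : lam (j + 1) ≤ b' := by
              by_contra h
              push_neg at h
              exact hcb' ⟨he1, h⟩
            have hset : Set.Ico b b' ∩ Set.Ico (lam j) (lam (j + 1))
                = Set.Ico (lam j) (lam (j + 1)) := by
              rw [Set.Ico_inter_Ico, max_eq_right hble, min_eq_right hb'ge]
            have hd : 0 < lam (j + 1) - lam j := by linarith [hlam_lt j hj]
            have hterm : (q : ℝ) * (MeasureTheory.volume
                (Set.Ico b b' ∩ Set.Ico (lam j) (lam (j + 1)))).toReal
                / (lam (j + 1) - lam j) = q := by
              rw [hset, Real.volume_Ico, ENNReal.toReal_ofReal hd.le,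
                mul_div_assoc, div_self hd.ne', mul_one]
            rw [hterm]
            linarith
  -- indicator sums
  have indic : ∀ x : ℝ,
      (∑ j ∈ Finset.range s, if lam j < x ∧ x < lam (j + 1) then (q : ℝ) else 0) ≤ q := by
    intro x
    rw [← Finset.sum_filter]
    have hcard : ((Finset.range s).filter (fun j => lam j < x ∧ x < lam (j + 1))).card ≤ 1 := by
      apply Finset.card_le_one.mpr
      intro j hjm k hkm
      simp only [Finset.mem_filter, Finset.mem_range] at hjm hkm
      by_contra hne
      rcases Nat.lt_or_ge j k with h | h
      · have : lam (j + 1) ≤ lam k := hlam_mono (j + 1) k (by omega) (by omega)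
        linarith [hjm.2.2, hkm.2.1]
      · have hkj : k < j := by omega
        have : lam (k + 1) ≤ lam j := hlam_mono (k + 1) j (by omega) (by omega)
        linarith [hkm.2.2, hjm.2.1]
    calc (∑ _j ∈ (Finset.range s).filter (fun j => lam j < x ∧ x < lam (j + 1)), (q : ℝ))
        = ((Finset.range s).filter (fun j => lam j < x ∧ x < lam (j + 1))).card * q := by
          rw [Finset.sum_const, nsmul_eq_mul]
      _ ≤ 1 * q := by
          apply mul_le_mul_of_nonneg_right _ (by positivity)
          exact_mod_cast hcard
      _ = q := one_mul _
  have hsum := Finset.sum_le_sum perj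
  rw [Finset.sum_add_distrib, Finset.sum_add_distrib] at hsum
  have hib := indic b
  have hib' := indic b'
  linarith
end

section
/- Let t ≥ 1, r ≥ 1 and q ≥ 2 be integers, set s = r·t, m = s·q and n = m·t. Let A_1, ..., A_t be pairwise disjoint sets of real numbers, each of size m, whose union S consists of n distinct reals. For each i, let a_{i,1} < ... < a_{i,m} be the increasing enumeration of A_i, define λ_{i,0} = a_{i,1} and λ_{i,j} = a_{i,j·q} for 1 ≤ j ≤ s, and define the total estimated count of a half-open interval [b, b') as est(b, b') = Σ_{i=1}^t Σ_{j=0}^{s−1} q · len([b, b') ∩ [λ_{i,j}, λ_{i,j+1})) / (λ_{i,j+1} − λ_{i,j}), where len denotes interval length. If [b, b') is an interval with est(b, b') = m, then |S ∩ [b, b')| ≤ m + 2m/r + t = (1 + 2/r + t²/n)·m. -/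
open Finset MeasureTheory

/-- Per-machine bound: the number of values of one machine falling in `[b,b')`
is at most its estimated count plus `2q + 1`. -/
lemma smms_machine (s q m : ℕ) (hq : 2 ≤ q) (hs : 1 ≤ s) (hm : m = s * q)
    (av : Fin m → ℝ) (hmono : StrictMono av)
    (lam : ℕ → ℝ) (hm0 : 0 < m)
    (hlam0 : lam 0 = av ⟨0, hm0⟩)
    (hlamj : ∀ j, 1 ≤ j → j ≤ s → ∀ (hlt : j * q - 1 < m), lam j = av ⟨j * q - 1, hlt⟩)
    (b b' : ℝ) :
    ((Finset.univ.filter (fun k : Fin m => b ≤ av k ∧ av k < b')).card : ℝ)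
      ≤ (∑ j ∈ Finset.range s,
          (q : ℝ) * (volume (Set.Ico b b' ∩ Set.Ico (lam j) (lam (j + 1)))).toReal
            / (lam (j + 1) - lam j)) + 2 * q + 1 := by
  have hq0 : 0 < q := by omega
  have hidx : ∀ j, 1 ≤ j → j ≤ s → j * q - 1 < m := by
    intro j h1 h2
    have := Nat.mul_le_mul_right q h2
    subst hm; omega
  -- strict monotonicity of lam on 0..s
  have hlt : ∀ j, j < s → lam j < lam (j + 1) := by
    intro j hj
    rcases Nat.eq_zero_or_pos j with h0 | h1
    · subst h0
      rw [hlam0, hlamj 1 le_rfl hs (hidx 1 le_rfl hs)]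
      exact hmono (by simp [Fin.lt_def]; omega)
    · rw [hlamj j h1 (by omega) (hidx j h1 (by omega)),
        hlamj (j + 1) (by omega) (by omega) (hidx (j + 1) (by omega) (by omega))]
      apply hmono
      have hexp : (j + 1) * q = j * q + q := by ring
      have hjq : 1 * q ≤ j * q := Nat.mul_le_mul_right q h1
      simp [Fin.lt_def]; omega
  have hlam_mono : ∀ j j', j ≤ j' → j' ≤ s → lam j ≤ lam j' := by
    intro j j' hjj hj's
    induction j' with
    | zero => interval_cases j; exact le_rfl
    | succ j' ih =>
      rcases Nat.lt_or_ge j (j' + 1) with h | h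
      · exact le_trans (ih (by omega) (by omega)) (le_of_lt (hlt j' (by omega)))
      · have : j = j' + 1 := by omega
        subst this; exact le_rfl
  classical
  set F : Finset ℕ := (Finset.range s).filter (fun j => b ≤ lam j ∧ lam (j + 1) ≤ b') with hF
  set O : Finset ℕ := (Finset.range s).filter
      (fun j => ∃ k : Fin m, (b ≤ av k ∧ av k < b') ∧ lam j ≤ av k ∧ av k < lam (j + 1)) with hO
  set est : ℝ := ∑ j ∈ Finset.range s,
      (q : ℝ) * (volume (Set.Ico b b' ∩ Set.Ico (lam j) (lam (j + 1)))).toReal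
        / (lam (j + 1) - lam j) with hest
  -- each term of est is nonnegative
  have hterm_nonneg : ∀ j ∈ Finset.range s,
      0 ≤ (q : ℝ) * (volume (Set.Ico b b' ∩ Set.Ico (lam j) (lam (j + 1)))).toReal
        / (lam (j + 1) - lam j) := by
    intro j hj
    rw [Finset.mem_range] at hj
    have := hlt j hj
    apply div_nonneg
    · positivity
    · linarith
  -- terms over F equal q
  have hterm_F : ∀ j ∈ F,
      (q : ℝ) * (volume (Set.Ico b b' ∩ Set.Ico (lam j) (lam (j + 1)))).toReal
        / (lam (j + 1) - lam j) = q := by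
    intro j hj
    rw [hF, Finset.mem_filter, Finset.mem_range] at hj
    obtain ⟨hjs, hb, hb'⟩ := hj
    have hjlt := hlt j hjs
    have hinter : Set.Ico b b' ∩ Set.Ico (lam j) (lam (j + 1)) = Set.Ico (lam j) (lam (j + 1)) :=
      Set.inter_eq_self_of_subset_right (Set.Ico_subset_Ico hb hb')
    rw [hinter, Real.volume_Ico, ENNReal.toReal_ofReal (by linarith), mul_div_assoc,
      div_self (by linarith), mul_one]
  -- est ≥ q * #F
  have hestF : (q : ℝ) * F.card ≤ est := by
    have h1 : (q : ℝ) * F.card = ∑ j ∈ F,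
        (q : ℝ) * (volume (Set.Ico b b' ∩ Set.Ico (lam j) (lam (j + 1)))).toReal
          / (lam (j + 1) - lam j) := by
      rw [Finset.sum_congr rfl hterm_F, Finset.sum_const, nsmul_eq_mul, mul_comm]
    rw [hest, h1]
    exact Finset.sum_le_sum_of_subset_of_nonneg (Finset.filter_subset _ _)
      (fun j hj _ => hterm_nonneg j hj)
  -- the set of counted points
  set C : Finset (Fin m) := Finset.univ.filter (fun k : Fin m => b ≤ av k ∧ av k < b') with hC
  set last : Fin m := ⟨m - 1, by omega⟩ with hlast
  set C' : Finset (Fin m) := C.erase last with hC'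
  have hcard1 : C.card ≤ C'.card + 1 := by
    calc C.card ≤ (insert last C').card :=
          Finset.card_le_card (Finset.subset_insert_iff.mpr (le_refl _))
      _ ≤ C'.card + 1 := Finset.card_insert_le _ _
  set f : Fin m → ℕ := fun k => (k.1 + 1) / q with hf
  -- div/mod facts
  have hdm : ∀ k : Fin m, f k * q ≤ k.1 + 1 ∧ k.1 + 1 < f k * q + q := by
    intro k
    have h1 := Nat.div_add_mod (k.1 + 1) q
    have h2 := Nat.mod_lt (k.1 + 1) hq0
    have h3 : f k * q = q * ((k.1 + 1) / q) := Nat.mul_comm _ _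
    constructor <;> omega
  -- fibers of f have size ≤ q
  have hfiber : ∀ j ∈ C'.image f, (C'.filter (fun k => f k = j)).card ≤ q := by
    intro j _
    have : (C'.filter (fun k => f k = j)).card ≤ (Finset.range q).card := by
      apply Finset.card_le_card_of_injOn (fun k => k.1 + 1 - j * q)
      · intro k hk
        rw [Finset.mem_coe, Finset.mem_filter] at hk
        obtain ⟨-, hkj⟩ := hk
        have := hdm k
        rw [hkj] at this
        simp only [Finset.mem_coe, Finset.mem_range]; omega
      · intro k hk k' hk' heq
        simp only [Finset.coe_filter, Set.mem_setOf_eq] at hk hk'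
        have h1 := hdm k; have h2 := hdm k'
        rw [hk.2] at h1; rw [hk'.2] at h2
        simp only at heq
        apply Fin.ext; omega
    simpa using this
  have hcard2 : C'.card ≤ q * (C'.image f).card :=
    Finset.card_le_mul_card_image C' q hfiber
  -- image of f on C' lands in O
  have himg : C'.image f ⊆ O := by
    intro j hj
    rw [Finset.mem_image] at hj
    obtain ⟨k, hk, rfl⟩ := hj
    rw [hC', Finset.mem_erase, hC, Finset.mem_filter] at hk
    obtain ⟨hklast, -, hkb, hkb'⟩ := hk
    have hkval : k.1 < m - 1 := by
      have := k.2
      rcases Nat.lt_or_ge k.1 (m - 1) with h | h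
      · exact h
      · exfalso; apply hklast; apply Fin.ext; simp [hlast]; omega
    have hdmk := hdm k
    have hjs : f k < s := by
      by_contra hcon
      push_neg at hcon
      have := Nat.mul_le_mul_right q hcon
      omega
    rw [hO, Finset.mem_filter, Finset.mem_range]
    refine ⟨hjs, k, ⟨hkb, hkb'⟩, ?_, ?_⟩
    · rcases Nat.eq_zero_or_pos (f k) with h0 | h1
      · rw [h0, hlam0]
        exact hmono.monotone (by simp [Fin.le_def])
      · rw [hlamj (f k) h1 (by omega) (hidx (f k) h1 (by omega))]
        exact hmono.monotone (by simp [Fin.le_def]; omega)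
    · rw [hlamj (f k + 1) (by omega) (by omega) (hidx (f k + 1) (by omega) (by omega))]
      apply hmono
      have hexp : (f k + 1) * q = f k * q + q := by ring
      simp [Fin.lt_def]; omega
  -- #O ≤ #F + 2
  have hOF : O.card ≤ F.card + 2 := by
    rcases O.eq_empty_or_nonempty with h | hne
    · rw [h]; simp
    · set j0 := O.min' hne with hj0
      set j1 := O.max' hne with hj1
      have hsub : O \ {j0, j1} ⊆ F := by
        intro j hj
        rw [Finset.mem_sdiff, Finset.mem_insert, Finset.mem_singleton] at hj
        push_neg at hj
        obtain ⟨hjO, hjne0, hjne1⟩ := hj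
        have hj0lt : j0 < j := lt_of_le_of_ne (O.min'_le j hjO) (Ne.symm hjne0)
        have hj1gt : j < j1 := lt_of_le_of_ne (O.le_max' j hjO) hjne1
        have hj1O : j1 ∈ O := O.max'_mem hne
        have hj0O : j0 ∈ O := O.min'_mem hne
        rw [hO, Finset.mem_filter, Finset.mem_range] at hjO hj1O hj0O
        obtain ⟨hjs, -⟩ := hjO
        obtain ⟨hj1s, k1, ⟨-, hk1b'⟩, hk1lam, -⟩ := hj1O
        obtain ⟨hj0s, k0, ⟨hk0b, -⟩, -, hk0lam⟩ := hj0O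
        rw [hF, Finset.mem_filter, Finset.mem_range]
        refine ⟨hjs, ?_, ?_⟩
        · have h1 : lam (j0 + 1) ≤ lam j := hlam_mono _ _ (by omega) (by omega)
          linarith
        · have h1 : lam (j + 1) ≤ lam j1 := hlam_mono _ _ (by omega) (by omega)
          linarith
      calc O.card ≤ ((O \ {j0, j1}) ∪ {j0, j1}).card := by
            apply Finset.card_le_card
            intro x hx
            rw [Finset.mem_union, Finset.mem_sdiff]
            by_cases h : x ∈ ({j0, j1} : Finset ℕ)
            · exact Or.inr h
            · exact Or.inl ⟨hx, h⟩
        _ ≤ (O \ {j0, j1}).card + ({j0, j1} : Finset ℕ).card := Finset.card_union_le _ _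
        _ ≤ F.card + 2 := by
            have h1 := Finset.card_le_card hsub
            have h2 : ({j0, j1} : Finset ℕ).card ≤ 2 :=
              le_trans (Finset.card_insert_le _ _) (by simp)
            omega
  -- combine in ℕ then cast
  have hnat : C.card ≤ q * F.card + 2 * q + 1 := by
    have h1 : q * (C'.image f).card ≤ q * O.card :=
      Nat.mul_le_mul_left q (Finset.card_le_card himg)
    have h2 : q * O.card ≤ q * (F.card + 2) := Nat.mul_le_mul_left q hOF
    have h3 : q * (F.card + 2) = q * F.card + 2 * q := by ring
    omega
  calc (C.card : ℝ) ≤ (q * F.card + 2 * q + 1 : ℕ) := by exact_mod_cast hnat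
    _ = (q : ℝ) * F.card + 2 * q + 1 := by push_cast; ring
    _ ≤ est + 2 * q + 1 := by linarith

/-- SMMS workload theorem: `n = m·t` objects (all distinct reals) are split into
`t` groups of `m = s·q` objects with `s = r·t`; machine `i` holds the values
`a i 0 < a i 1 < ... < a i (m-1)` and samples `λ_{i,0} = a i 1` (the minimum) and
`λ_{i,j} =` the `(j·q)`-th smallest, for `1 ≤ j ≤ s`.  If `[b, b')` is a bucket
whose total estimated count (assuming uniform density `q` over each local
interval `[λ_{i,j}, λ_{i,j+1})`) equals `m`, then the actual number of objects in
`[b, b')` is at most `m + 2m/r + t = (1 + 2/r + t²/n)·m`. -/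
theorem smms_workload (t r q : ℕ) (ht : 1 ≤ t) (hr : 1 ≤ r) (hq : 2 ≤ q)
    (s : ℕ) (hs : s = r * t) (m : ℕ) (hm : m = s * q) (n : ℕ) (hn : n = m * t)
    (a : Fin t → Fin m → ℝ)
    (hmono : ∀ i, StrictMono (a i))
    (hinj : Function.Injective (fun p : Fin t × Fin m => a p.1 p.2))
    (lam : Fin t → ℕ → ℝ)
    (hlam0 : ∀ i, lam i 0 =
        a i ⟨0, by subst hm hs; exact Nat.mul_pos (Nat.mul_pos hr ht) (by omega)⟩)
    (hlamj : ∀ i j, (hj1 : 1 ≤ j) → (hj2 : j ≤ s) → lam i j =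
        a i ⟨j * q - 1, by
            subst hm
            exact lt_of_lt_of_le
              (Nat.sub_lt (Nat.mul_pos (by omega) (by omega)) (by omega))
              (Nat.mul_le_mul_right q hj2)⟩)
    (b b' : ℝ) (hbb' : b < b')
    (hest : (∑ i : Fin t, ∑ j ∈ Finset.range s,
        (q : ℝ) * (MeasureTheory.volume
            (Set.Ico b b' ∩ Set.Ico (lam i j) (lam i (j + 1)))).toReal
          / (lam i (j + 1) - lam i j)) = (m : ℝ)) :
    ((Finset.univ.filter
        (fun p : Fin t × Fin m => b ≤ a p.1 p.2 ∧ a p.1 p.2 < b')).card : ℝ)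
      ≤ (m : ℝ) + 2 * m / r + t
    ∧ (m : ℝ) + 2 * m / r + t = (1 + 2 / r + (t : ℝ) ^ 2 / n) * m := by
  have hs1 : 1 ≤ s := by subst hs; exact Nat.one_le_iff_ne_zero.mpr (by positivity)
  have hm0 : 0 < m := by subst hm; exact Nat.mul_pos (by omega) (by omega)
  have hn0 : 0 < n := by subst hn; exact Nat.mul_pos hm0 (by omega)
  constructor
  · -- per-machine bound
    have key : ∀ i : Fin t,
        ((Finset.univ.filter (fun k : Fin m => b ≤ a i k ∧ a i k < b')).card : ℝ)
          ≤ (∑ j ∈ Finset.range s,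
              (q : ℝ) * (volume (Set.Ico b b' ∩ Set.Ico (lam i j) (lam i (j + 1)))).toReal
                / (lam i (j + 1) - lam i j)) + 2 * q + 1 := by
      intro i
      exact smms_machine s q m hq hs1 hm (a i) (hmono i) (lam i) hm0 (hlam0 i)
        (fun j h1 h2 hlt => hlamj i j h1 h2) b b'
    -- fiberwise count
    classical
    have hcard : (Finset.univ.filter
        (fun p : Fin t × Fin m => b ≤ a p.1 p.2 ∧ a p.1 p.2 < b')).card
        = ∑ i : Fin t,
          (Finset.univ.filter (fun k : Fin m => b ≤ a i k ∧ a i k < b')).card := by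
      have hfib : ∀ i : Fin t,
          Finset.filter (fun p : Fin t × Fin m => p.1 = i)
            (Finset.univ.filter (fun p : Fin t × Fin m => b ≤ a p.1 p.2 ∧ a p.1 p.2 < b'))
          = (Finset.univ.filter (fun k : Fin m => b ≤ a i k ∧ a i k < b')).image
              (fun k => (i, k)) := by
        intro i
        ext ⟨i', k⟩
        simp only [Finset.mem_filter, Finset.mem_univ, true_and, Finset.mem_image]
        constructor
        · rintro ⟨⟨h1, h2⟩, h3⟩
          subst h3
          exact ⟨k, ⟨h1, h2⟩, rfl⟩
        · rintro ⟨k', ⟨h1, h2⟩, heq⟩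
          injection heq with e1 e2
          subst e1; subst e2
          exact ⟨⟨h1, h2⟩, rfl⟩
      rw [Finset.card_eq_sum_card_fiberwise (f := Prod.fst) (t := Finset.univ)
        (fun x _ => Finset.mem_univ _)]
      refine Finset.sum_congr rfl fun i _ => ?_
      rw [hfib i, Finset.card_image_of_injective _ (fun x y h => congrArg Prod.snd h)]
    rw [hcard]
    push_cast
    have hsum : ∑ i : Fin t,
        ((Finset.univ.filter (fun k : Fin m => b ≤ a i k ∧ a i k < b')).card : ℝ)
        ≤ (m : ℝ) + t * (2 * q + 1) := by
      calc ∑ i : Fin t,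
          ((Finset.univ.filter (fun k : Fin m => b ≤ a i k ∧ a i k < b')).card : ℝ)
          ≤ ∑ i : Fin t, ((∑ j ∈ Finset.range s,
              (q : ℝ) * (volume (Set.Ico b b' ∩ Set.Ico (lam i j) (lam i (j + 1)))).toReal
                / (lam i (j + 1) - lam i j)) + 2 * q + 1) :=
            Finset.sum_le_sum (fun i _ => key i)
        _ = (∑ i : Fin t, ∑ j ∈ Finset.range s,
              (q : ℝ) * (volume (Set.Ico b b' ∩ Set.Ico (lam i j) (lam i (j + 1)))).toReal
                / (lam i (j + 1) - lam i j)) + t * (2 * q + 1) := by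
            rw [Finset.sum_add_distrib, Finset.sum_add_distrib]
            simp [Finset.card_univ]
            ring
        _ = (m : ℝ) + t * (2 * q + 1) := by rw [hest]
    have hmr : (m : ℝ) = r * t * q := by
      have : m = r * t * q := by rw [hm, hs]
      exact_mod_cast this
    have hr0 : (r : ℝ) ≠ 0 := by positivity
    have h2mr : 2 * (m : ℝ) / r = 2 * t * q := by
      rw [hmr]; field_simp
    rw [h2mr]
    linarith [hsum]
  · -- the algebraic identity
    have hmr : (n : ℝ) = m * t := by exact_mod_cast hn
    have hm0' : (m : ℝ) ≠ 0 := by positivity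
    have ht0 : (t : ℝ) ≠ 0 := by positivity
    have hn0' : (n : ℝ) ≠ 0 := by positivity
    have hr0 : (r : ℝ) ≠ 0 := by positivity
    have hkey : (t : ℝ) ^ 2 / n * m = t := by
      rw [hmr]; field_simp
    field_simp
    rw [hmr]
    ring
end

section
/- Let a, b be positive integers and t = a·b. Let M, N be positive integers and let X and Y be independent random variables with X binomially distributed with parameters M and 1/a, and Y binomially distributed with parameters N and 1/b. Let δ > 0 and f(δ) = e^δ / (1+δ)^{1+δ}. Then Pr[X·Y ≤ (1+δ)² · M·N / t] ≥ 1 − f(δ)^{M/a} − f(δ)^{N/b}. -/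
open MeasureTheory


lemma chernoff_key (p : ℝ) (hp0 : 0 < p) (hp1 : p ≤ 1) (M : ℕ) (δ : ℝ) (hδ : 0 < δ) :
    ∑' i : {i : ℕ // (1+δ) * ((M:ℝ) * p) < (i : ℝ)},
      ((M.choose (i:ℕ) : ℝ) * p ^ (i:ℕ) * (1-p) ^ (M - (i:ℕ)))
    ≤ (Real.exp δ / (1+δ) ^ (1+δ)) ^ ((M:ℝ) * p) := by
  set μ : ℝ := (M:ℝ) * p with hμ
  set c : ℝ := (1+δ) * μ with hc
  have hδ1 : (1:ℝ) ≤ 1 + δ := by linarith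
  have hδ0 : (0:ℝ) < 1 + δ := by linarith
  set g : ℕ → ℝ := fun i => (M.choose i : ℝ) * p ^ i * (1-p) ^ (M - i) with hg
  set h : ℕ → ℝ := fun i => g i * (1+δ) ^ i * (1+δ) ^ (-c) with hh
  have hg0 : ∀ i, 0 ≤ g i := fun i => by
    apply mul_nonneg (mul_nonneg (Nat.cast_nonneg _) (pow_nonneg hp0.le _))
    exact pow_nonneg (by linarith) _
  have hgz : ∀ i ∉ Finset.range (M+1), g i = 0 := by
    intro i hi
    simp only [Finset.mem_range, not_lt] at hi
    have : M.choose i = 0 := Nat.choose_eq_zero_of_lt (by omega)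
    simp [hg, this]
  have hgsum : Summable g := summable_of_ne_finset_zero hgz
  have hhz : ∀ i ∉ Finset.range (M+1), h i = 0 := fun i hi => by simp [hh, hgz i hi]
  have hhsum : Summable h := summable_of_ne_finset_zero hhz
  have hc0 : 0 ≤ c := by
    apply mul_nonneg hδ0.le
    exact mul_nonneg (Nat.cast_nonneg _) hp0.le
  have step1 : ∑' i : {i : ℕ // c < (i : ℝ)}, g (i:ℕ) ≤ ∑' i, h i := by
    apply Summable.tsum_le_tsum_of_inj (Subtype.val) Subtype.val_injective
    · intro i _; exact mul_nonneg (mul_nonneg (hg0 i) (pow_nonneg hδ0.le _))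
        (Real.rpow_nonneg hδ0.le _)
    · rintro ⟨i, hi⟩
      show g i ≤ h i
      have h1 : (1:ℝ) ≤ (1+δ) ^ i * (1+δ) ^ (-c) := by
        have : (1+δ:ℝ) ^ i * (1+δ) ^ (-c) = (1+δ) ^ ((i:ℝ) - c) := by
          rw [← Real.rpow_natCast (1+δ) i, ← Real.rpow_add hδ0, sub_eq_add_neg]
        rw [this]
        exact Real.one_le_rpow hδ1 (by linarith)
      calc g i = g i * 1 := (mul_one _).symm
        _ ≤ g i * ((1+δ) ^ i * (1+δ) ^ (-c)) := mul_le_mul_of_nonneg_left h1 (hg0 i)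
        _ = h i := by simp [hh, mul_assoc]
    · exact hgsum.subtype _
    · exact hhsum
  have step2 : ∑' i, h i = (1 + p*δ) ^ M * (1+δ) ^ (-c) := by
    rw [tsum_eq_sum hhz]
    have : ∑ i ∈ Finset.range (M+1), h i
        = (∑ i ∈ Finset.range (M+1), (p*(1+δ)) ^ i * (1-p) ^ (M-i) * (M.choose i : ℝ))
          * (1+δ) ^ (-c) := by
      rw [Finset.sum_mul]
      apply Finset.sum_congr rfl
      intro i _
      simp only [hh, hg, mul_pow]
      ring
    rw [this, ← add_pow]
    congr 1
    ring_nf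
  have step3 : (1 + p*δ) ^ M ≤ Real.exp (δ * μ) := by
    have h1 : (1 + p*δ:ℝ) ≤ Real.exp (p*δ) := by
      have := Real.add_one_le_exp (p*δ); linarith
    calc (1 + p*δ:ℝ) ^ M ≤ Real.exp (p*δ) ^ M := pow_le_pow_left₀ (by positivity) h1 M
      _ = Real.exp ((M:ℝ) * (p*δ)) := (Real.exp_nat_mul _ M).symm
      _ = Real.exp (δ * μ) := by rw [hμ]; ring_nf
  have hrhs : (Real.exp δ / (1+δ) ^ (1+δ)) ^ μ = Real.exp (δ * μ) * (1+δ) ^ (-c) := by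
    rw [Real.div_rpow (Real.exp_pos _).le (Real.rpow_nonneg hδ0.le _),
        ← Real.exp_mul, ← Real.rpow_mul hδ0.le, ← hc, Real.rpow_neg hδ0.le,
        div_eq_mul_inv]
  calc ∑' i : {i : ℕ // c < (i : ℝ)}, g (i:ℕ) ≤ ∑' i, h i := step1
    _ = (1 + p*δ) ^ M * (1+δ) ^ (-c) := step2
    _ ≤ Real.exp (δ * μ) * (1+δ) ^ (-c) :=
        mul_le_mul_of_nonneg_right step3 (Real.rpow_nonneg hδ0.le _)
    _ = (Real.exp δ / (1+δ) ^ (1+δ)) ^ μ := hrhs.symm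


lemma tail_bound {Ω : Type*} [MeasurableSpace Ω] (Pr : Measure Ω)
    (a : ℕ) (ha : 0 < a) (M : ℕ) (X : Ω → ℕ)
    (hX : ∀ i : ℕ, Pr {ω | X ω = i} =
        ENNReal.ofReal ((M.choose i : ℝ) * (1 / (a : ℝ)) ^ i * (1 - 1 / (a : ℝ)) ^ (M - i)))
    (δ : ℝ) (hδ : 0 < δ) :
    Pr {ω | (1+δ) * ((M:ℝ) * (1/(a:ℝ))) < (X ω : ℝ)}
      ≤ ENNReal.ofReal ((Real.exp δ / (1+δ) ^ (1+δ)) ^ ((M:ℝ) / a)) := by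
  have ha0 : (0:ℝ) < (a:ℝ) := by exact_mod_cast ha
  have hp0 : (0:ℝ) < 1/(a:ℝ) := by positivity
  have hp1 : (1:ℝ)/(a:ℝ) ≤ 1 := by
    rw [div_le_one ha0]; exact_mod_cast ha
  set c : ℝ := (1+δ) * ((M:ℝ) * (1/(a:ℝ))) with hc
  set g : ℕ → ℝ := fun i => (M.choose i : ℝ) * (1/(a:ℝ)) ^ i * (1 - 1/(a:ℝ)) ^ (M - i) with hg
  have hg0 : ∀ i, 0 ≤ g i := fun i => by
    apply mul_nonneg (mul_nonneg (Nat.cast_nonneg _) (pow_nonneg hp0.le _))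
    exact pow_nonneg (by linarith) _
  have hgz : ∀ i ∉ Finset.range (M+1), g i = 0 := by
    intro i hi
    simp only [Finset.mem_range, not_lt] at hi
    have : M.choose i = 0 := Nat.choose_eq_zero_of_lt (by omega)
    simp [hg, this]
  have hgsum : Summable g := summable_of_ne_finset_zero hgz
  have hsub : {ω | c < (X ω : ℝ)} ⊆ ⋃ i : {i : ℕ // c < (i:ℝ)}, {ω | X ω = (i:ℕ)} := by
    intro ω hω
    exact Set.mem_iUnion.mpr ⟨⟨X ω, hω⟩, rfl⟩
  calc Pr {ω | c < (X ω : ℝ)}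
      ≤ Pr (⋃ i : {i : ℕ // c < (i:ℝ)}, {ω | X ω = (i:ℕ)}) := measure_mono hsub
    _ ≤ ∑' i : {i : ℕ // c < (i:ℝ)}, Pr {ω | X ω = (i:ℕ)} := measure_iUnion_le _
    _ = ∑' i : {i : ℕ // c < (i:ℝ)}, ENNReal.ofReal (g (i:ℕ)) := by
        exact tsum_congr fun i => hX (i:ℕ)
    _ = ENNReal.ofReal (∑' i : {i : ℕ // c < (i:ℝ)}, g (i:ℕ)) := by
        exact (ENNReal.ofReal_tsum_of_nonneg (fun i => hg0 _) (hgsum.subtype _)).symm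
    _ ≤ ENNReal.ofReal ((Real.exp δ / (1+δ) ^ (1+δ)) ^ ((M:ℝ) / a)) := by
        apply ENNReal.ofReal_le_ofReal
        have h2 : ((M:ℝ)/a) = (M:ℝ) * (1/(a:ℝ)) := by ring
        rw [h2]
        exact chernoff_key (1/(a:ℝ)) hp0 hp1 M δ hδ

/-- Product Chernoff bound used in the RandJoin analysis: let `t = a·b`, let `X`
and `Y` be independent with `X ~ Binomial(M, 1/a)` and `Y ~ Binomial(N, 1/b)`,
and let `f δ = e^δ / (1+δ)^(1+δ)`.  Then
`Pr[X·Y ≤ (1+δ)²·M·N/t] ≥ 1 - f(δ)^(M/a) - f(δ)^(N/b)`. -/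
theorem randjoin_product_chernoff {Ω : Type*} [MeasurableSpace Ω] (Pr : Measure Ω)
    [IsProbabilityMeasure Pr]
    (a b : ℕ) (ha : 0 < a) (hb : 0 < b) (t : ℕ) (ht : t = a * b)
    (M N : ℕ) (hM : 0 < M) (hN : 0 < N)
    (X Y : Ω → ℕ)
    (hX : ∀ i : ℕ, Pr {ω | X ω = i} =
        ENNReal.ofReal ((M.choose i : ℝ) * (1 / (a : ℝ)) ^ i * (1 - 1 / (a : ℝ)) ^ (M - i)))
    (hY : ∀ j : ℕ, Pr {ω | Y ω = j} =
        ENNReal.ofReal ((N.choose j : ℝ) * (1 / (b : ℝ)) ^ j * (1 - 1 / (b : ℝ)) ^ (N - j)))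
    (hindep : ∀ i j : ℕ,
        Pr ({ω | X ω = i} ∩ {ω | Y ω = j}) = Pr {ω | X ω = i} * Pr {ω | Y ω = j})
    (δ : ℝ) (hδ : 0 < δ) :
    Pr {ω | ((X ω : ℝ) * (Y ω : ℝ)) ≤ (1 + δ) ^ 2 * M * N / t}
      ≥ ENNReal.ofReal
          (1 - (Real.exp δ / (1 + δ) ^ (1 + δ)) ^ ((M : ℝ) / a)
             - (Real.exp δ / (1 + δ) ^ (1 + δ)) ^ ((N : ℝ) / b)) := by
  have ha0 : (0:ℝ) < (a:ℝ) := by exact_mod_cast ha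
  have hb0 : (0:ℝ) < (b:ℝ) := by exact_mod_cast hb
  set r1 := (Real.exp δ / (1 + δ) ^ (1 + δ)) ^ ((M : ℝ) / a) with hr1def
  set r2 := (Real.exp δ / (1 + δ) ^ (1 + δ)) ^ ((N : ℝ) / b) with hr2def
  have hδ0 : (0:ℝ) < 1 + δ := by linarith
  have hf0 : 0 ≤ Real.exp δ / (1 + δ) ^ (1 + δ) :=
    div_nonneg (Real.exp_pos _).le (Real.rpow_nonneg hδ0.le _)
  have hr1nn : 0 ≤ r1 := Real.rpow_nonneg hf0 _
  have hr2nn : 0 ≤ r2 := Real.rpow_nonneg hf0 _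
  set cA : ℝ := (1+δ) * ((M:ℝ) * (1/(a:ℝ))) with hcA
  set cB : ℝ := (1+δ) * ((N:ℝ) * (1/(b:ℝ))) with hcB
  set S := {ω | ((X ω : ℝ) * (Y ω : ℝ)) ≤ (1 + δ) ^ 2 * M * N / t} with hS
  set A := {ω | cA < (X ω : ℝ)} with hA
  set B := {ω | cB < (Y ω : ℝ)} with hB
  have hPA : Pr A ≤ ENNReal.ofReal r1 := tail_bound Pr a ha M X hX δ hδ
  have hPB : Pr B ≤ ENNReal.ofReal r2 := tail_bound Pr b hb N Y hY δ hδ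
  have hcover : (Set.univ : Set Ω) ⊆ S ∪ (A ∪ B) := by
    intro ω _
    by_cases hωA : ω ∈ A
    · exact Or.inr (Or.inl hωA)
    by_cases hωB : ω ∈ B
    · exact Or.inr (Or.inr hωB)
    left
    simp only [hA, Set.mem_setOf_eq, not_lt] at hωA
    simp only [hB, Set.mem_setOf_eq, not_lt] at hωB
    have hcc : cA * cB = (1 + δ) ^ 2 * M * N / t := by
      rw [hcA, hcB, ht]
      push_cast
      field_simp
    show ((X ω : ℝ) * (Y ω : ℝ)) ≤ (1 + δ) ^ 2 * M * N / t
    rw [← hcc]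
    exact mul_le_mul hωA hωB (Nat.cast_nonneg _) (le_trans (Nat.cast_nonneg _) hωA)
  have hone : (1:ENNReal) ≤ Pr S + (ENNReal.ofReal r1 + ENNReal.ofReal r2) := by
    calc (1:ENNReal) = Pr Set.univ := (measure_univ).symm
      _ ≤ Pr (S ∪ (A ∪ B)) := measure_mono hcover
      _ ≤ Pr S + Pr (A ∪ B) := measure_union_le _ _
      _ ≤ Pr S + (Pr A + Pr B) := add_le_add_right (measure_union_le _ _) _
      _ ≤ Pr S + (ENNReal.ofReal r1 + ENNReal.ofReal r2) :=
          add_le_add_right (add_le_add hPA hPB) _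
  rw [ge_iff_le, ENNReal.ofReal_sub _ hr2nn, ENNReal.ofReal_sub _ hr1nn,
    ENNReal.ofReal_one]
  rw [tsub_le_iff_right, tsub_le_iff_right]
  refine le_trans hone (le_of_eq ?_)
  ring
end

section
/- Let a, b be positive integers and t = a·b. Let M, N be positive integers with M/a ≥ 300 and N/b ≥ 300, and let X and Y be independent random variables with X binomially distributed with parameters M and 1/a, and Y binomially distributed with parameters N and 1/b. Then Pr[X·Y < 2·M·N/t] ≥ 1 − 1.2×10⁻⁹. -/
open MeasureTheory

/-- Numerical bound: `exp (1/3) ≤ 1.3957`. -/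
lemma rj_exp_third : Real.exp (1/3) ≤ 1.3957 := by
  have h := Real.exp_bound' (x := 1/3) (by norm_num) (by norm_num) (n := 5) (by norm_num)
  have : (∑ m ∈ Finset.range 5, ((1:ℝ)/3) ^ m / m.factorial) +
      ((1:ℝ)/3) ^ 5 * (5 + 1) / ((5:ℕ).factorial * 5) ≤ 1.3957 := by
    simp [Finset.sum_range_succ, Nat.factorial]
    norm_num
  calc Real.exp (1/3) ≤ _ := h
    _ ≤ 1.3957 := this

/-- Numerical core: for `μ ≥ 300`,
`exp (μ (e^{1/3} - 1) - 1.4 μ / 3) ≤ 0.6 × 10⁻⁹`. -/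
lemma rj_numeric {μ : ℝ} (hμ : 300 ≤ μ) :
    Real.exp (μ * (Real.exp (1/3) - 1) - 1.4 * μ / 3) ≤ 0.6 / 10 ^ 9 := by
  have h13 := rj_exp_third
  have h13' : (1:ℝ) ≤ Real.exp (1/3) := by
    rw [Real.one_le_exp_iff]; norm_num
  have hexp : μ * (Real.exp (1/3) - 1) - 1.4 * μ / 3 ≤ -21.29 := by nlinarith
  have hmono : Real.exp (μ * (Real.exp (1/3) - 1) - 1.4 * μ / 3) ≤ Real.exp (-21.29) :=
    Real.exp_le_exp.2 hexp
  have h21 : (2.7182818283 : ℝ) ^ (21:ℕ) * 1.29 ≤ Real.exp 21.29 := by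
    have h1 : (2.7182818283 : ℝ) ^ (21:ℕ) ≤ Real.exp 1 ^ (21:ℕ) :=
      pow_le_pow_left₀ (by norm_num) Real.exp_one_gt_d9.le 21
    have h2 : Real.exp 1 ^ (21:ℕ) = Real.exp 21 := by
      rw [← Real.exp_nat_mul]; norm_num
    have h3 : (1.29 : ℝ) ≤ Real.exp 0.29 := by
      have := Real.add_one_le_exp (0.29 : ℝ); linarith
    have h4 : Real.exp 21.29 = Real.exp 21 * Real.exp 0.29 := by
      rw [← Real.exp_add]; norm_num
    rw [h4, ← h2]
    have hp : (0:ℝ) ≤ (2.7182818283 : ℝ) ^ (21:ℕ) := by positivity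
    nlinarith [Real.exp_pos (1:ℝ), pow_pos (Real.exp_pos 1) 21]
  have hpos : (0:ℝ) < (2.7182818283 : ℝ) ^ (21:ℕ) * 1.29 := by positivity
  have : Real.exp (-21.29) ≤ ((2.7182818283 : ℝ) ^ (21:ℕ) * 1.29)⁻¹ := by
    rw [Real.exp_neg]
    exact inv_anti₀ hpos h21
  have hnum : ((2.7182818283 : ℝ) ^ (21:ℕ) * 1.29)⁻¹ ≤ 0.6 / 10 ^ 9 := by
    rw [inv_le_iff_one_le_mul₀ hpos]
    norm_num
  linarith

/-- Chernoff-type tail bound for the binomial pmf, with parameter `λ = 1/3`. -/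
lemma rj_binom_tail (n : ℕ) (p c : ℝ) (hp0 : 0 ≤ p) (hp1 : p ≤ 1) :
    ∑ i ∈ Finset.range (n+1),
        (if c ≤ (i:ℝ) then (n.choose i : ℝ) * p ^ i * (1 - p) ^ (n - i) else 0)
      ≤ Real.exp ((n:ℝ) * p * (Real.exp (1/3) - 1) - c / 3) := by
  classical
  have hq : (0:ℝ) ≤ 1 - p := by linarith
  have h13 : (1:ℝ) ≤ Real.exp (1/3) := by rw [Real.one_le_exp_iff]; norm_num
  -- termwise bound
  have hterm : ∀ i ∈ Finset.range (n+1),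
      (if c ≤ (i:ℝ) then (n.choose i : ℝ) * p ^ i * (1 - p) ^ (n - i) else 0)
        ≤ Real.exp (-c/3) * ((n.choose i : ℝ) * (p * Real.exp (1/3)) ^ i * (1 - p) ^ (n - i)) := by
    intro i _
    have hnn : (0:ℝ) ≤ (n.choose i : ℝ) * p ^ i * (1 - p) ^ (n - i) := by positivity
    by_cases hc : c ≤ (i:ℝ)
    · rw [if_pos hc]
      have hrw : (p * Real.exp (1/3)) ^ i = p ^ i * Real.exp ((i:ℝ)/3) := by
        rw [mul_pow, ← Real.exp_nat_mul]
        ring_nf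
      rw [hrw]
      have hone : (1:ℝ) ≤ Real.exp (-c/3) * Real.exp ((i:ℝ)/3) := by
        rw [← Real.exp_add]
        rw [Real.one_le_exp_iff]
        linarith
      nlinarith [hnn, Real.exp_pos (-c/3), Real.exp_pos ((i:ℝ)/3)]
    · rw [if_neg hc]
      positivity
  have hsum := Finset.sum_le_sum hterm
  refine hsum.trans ?_
  rw [← Finset.mul_sum]
  have hbin : ∑ i ∈ Finset.range (n+1),
      (n.choose i : ℝ) * (p * Real.exp (1/3)) ^ i * (1 - p) ^ (n - i)
      = (p * Real.exp (1/3) + (1 - p)) ^ n := by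
    rw [add_pow]
    apply Finset.sum_congr rfl
    intro i _
    ring
  rw [hbin]
  have hbase : p * Real.exp (1/3) + (1 - p) = 1 + p * (Real.exp (1/3) - 1) := by ring
  have hb0 : (0:ℝ) ≤ 1 + p * (Real.exp (1/3) - 1) := by nlinarith
  have hple : (1 + p * (Real.exp (1/3) - 1)) ^ n ≤ Real.exp ((n:ℝ) * p * (Real.exp (1/3) - 1)) := by
    have h1 : 1 + p * (Real.exp (1/3) - 1) ≤ Real.exp (p * (Real.exp (1/3) - 1)) := by
      have := Real.add_one_le_exp (p * (Real.exp (1/3) - 1)); linarith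
    calc (1 + p * (Real.exp (1/3) - 1)) ^ n
        ≤ Real.exp (p * (Real.exp (1/3) - 1)) ^ n := pow_le_pow_left₀ hb0 h1 n
      _ = Real.exp ((n:ℝ) * (p * (Real.exp (1/3) - 1))) := (Real.exp_nat_mul _ n).symm
      _ = Real.exp ((n:ℝ) * p * (Real.exp (1/3) - 1)) := by ring_nf
  calc Real.exp (-c/3) * (p * Real.exp (1/3) + (1 - p)) ^ n
      ≤ Real.exp (-c/3) * Real.exp ((n:ℝ) * p * (Real.exp (1/3) - 1)) := by
        rw [hbase]
        exact mul_le_mul_of_nonneg_left hple (Real.exp_pos _).le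
    _ = Real.exp ((n:ℝ) * p * (Real.exp (1/3) - 1) - c / 3) := by
        rw [← Real.exp_add]; ring_nf

/-- Tail probability bound for a binomially distributed `ℕ`-valued random variable. -/
lemma rj_prob_tail {Ω : Type*} [MeasurableSpace Ω] (Pr : Measure Ω)
    (Z : Ω → ℕ) (n : ℕ) (p c : ℝ) (hp0 : 0 ≤ p) (hp1 : p ≤ 1)
    (hZ : ∀ i : ℕ, Pr {ω | Z ω = i} =
        ENNReal.ofReal ((n.choose i : ℝ) * p ^ i * (1 - p) ^ (n - i))) :
    Pr {ω | c ≤ (Z ω : ℝ)}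
      ≤ ENNReal.ofReal (Real.exp ((n:ℝ) * p * (Real.exp (1/3) - 1) - c / 3)) := by
  classical
  have hq : (0:ℝ) ≤ 1 - p := by linarith
  set S : ℕ → Set Ω := fun i => if c ≤ (i:ℝ) then {ω | Z ω = i} else ∅ with hS
  have hsub : {ω | c ≤ (Z ω : ℝ)} ⊆ ⋃ i, S i := by
    intro ω hω
    refine Set.mem_iUnion.2 ⟨Z ω, ?_⟩
    have hc : c ≤ (Z ω : ℝ) := hω
    simp only [hS]
    rw [if_pos hc]
    exact rfl
  have h1 : Pr {ω | c ≤ (Z ω : ℝ)} ≤ ∑' i, Pr (S i) :=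
    (measure_mono hsub).trans (measure_iUnion_le S)
  have hSval : ∀ i, Pr (S i) =
      ENNReal.ofReal (if c ≤ (i:ℝ) then (n.choose i : ℝ) * p ^ i * (1 - p) ^ (n - i) else 0) := by
    intro i
    by_cases hc : c ≤ (i:ℝ)
    · simp only [hS, if_pos hc]; exact hZ i
    · simp [hS, if_neg hc]
  have h2 : ∑' i, Pr (S i) = ∑ i ∈ Finset.range (n+1), Pr (S i) := by
    apply tsum_eq_sum
    intro i hi
    have hin : n < i := by
      by_contra h
      exact hi (Finset.mem_range.2 (by omega))
    have : n.choose i = 0 := Nat.choose_eq_zero_of_lt hin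
    rw [hSval i, this]
    simp
  have h3 : ∑ i ∈ Finset.range (n+1), Pr (S i) =
      ENNReal.ofReal (∑ i ∈ Finset.range (n+1),
        (if c ≤ (i:ℝ) then (n.choose i : ℝ) * p ^ i * (1 - p) ^ (n - i) else 0)) := by
    rw [ENNReal.ofReal_sum_of_nonneg]
    · exact Finset.sum_congr rfl fun i _ => hSval i
    · intro i _
      by_cases hc : c ≤ (i:ℝ)
      · rw [if_pos hc]; positivity
      · rw [if_neg hc]
  calc Pr {ω | c ≤ (Z ω : ℝ)} ≤ ∑' i, Pr (S i) := h1
    _ = _ := h2.trans h3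
    _ ≤ ENNReal.ofReal (Real.exp ((n:ℝ) * p * (Real.exp (1/3) - 1) - c / 3)) :=
        ENNReal.ofReal_le_ofReal (rj_binom_tail n p c hp0 hp1)

/-- Workload guarantee of RandJoin: let `t = a·b`, `M/a ≥ 300`, `N/b ≥ 300`, and
let `X` and `Y` be independent with `X ~ Binomial(M, 1/a)`, `Y ~ Binomial(N, 1/b)`.
Then `Pr[X·Y < 2·M·N/t] ≥ 1 - 1.2×10⁻⁹`. -/
theorem randjoin_workload {Ω : Type*} [MeasurableSpace Ω] (Pr : Measure Ω)
    [IsProbabilityMeasure Pr]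
    (a b : ℕ) (ha : 0 < a) (hb : 0 < b) (t : ℕ) (ht : t = a * b)
    (M N : ℕ) (hM : 0 < M) (hN : 0 < N)
    (hMa : (300 : ℝ) ≤ (M : ℝ) / a) (hNb : (300 : ℝ) ≤ (N : ℝ) / b)
    (X Y : Ω → ℕ)
    (hX : ∀ i : ℕ, Pr {ω | X ω = i} =
        ENNReal.ofReal ((M.choose i : ℝ) * (1 / (a : ℝ)) ^ i * (1 - 1 / (a : ℝ)) ^ (M - i)))
    (hY : ∀ j : ℕ, Pr {ω | Y ω = j} =
        ENNReal.ofReal ((N.choose j : ℝ) * (1 / (b : ℝ)) ^ j * (1 - 1 / (b : ℝ)) ^ (N - j)))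
    (hindep : ∀ i j : ℕ,
        Pr ({ω | X ω = i} ∩ {ω | Y ω = j}) = Pr {ω | X ω = i} * Pr {ω | Y ω = j}) :
    Pr {ω | ((X ω : ℝ) * (Y ω : ℝ)) < 2 * M * N / t}
      ≥ ENNReal.ofReal (1 - 1.2 / 10 ^ 9) := by
  have ha' : (0:ℝ) < a := by exact_mod_cast ha
  have hb' : (0:ℝ) < b := by exact_mod_cast hb
  have hpa0 : (0:ℝ) ≤ 1 / a := by positivity
  have hpa1 : (1:ℝ) / a ≤ 1 := by
    rw [div_le_one ha']; exact_mod_cast ha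
  have hpb0 : (0:ℝ) ≤ 1 / b := by positivity
  have hpb1 : (1:ℝ) / b ≤ 1 := by
    rw [div_le_one hb']; exact_mod_cast hb
  set μ1 : ℝ := (M:ℝ) / a with hμ1
  set μ2 : ℝ := (N:ℝ) / b with hμ2
  have hμ1pos : 0 < μ1 := by linarith
  have hμ2pos : 0 < μ2 := by linarith
  -- tail bounds for X and Y
  have hMp : (M:ℝ) * (1/a) = μ1 := by rw [hμ1]; field_simp
  have hNp : (N:ℝ) * (1/b) = μ2 := by rw [hμ2]; field_simp
  have hXtail : Pr {ω | 1.4 * μ1 ≤ (X ω : ℝ)} ≤ ENNReal.ofReal (0.6 / 10 ^ 9) := by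
    have h := rj_prob_tail Pr X M (1/a) (1.4 * μ1) hpa0 hpa1 hX
    refine h.trans (ENNReal.ofReal_le_ofReal ?_)
    rw [hMp]
    exact rj_numeric hMa
  have hYtail : Pr {ω | 1.4 * μ2 ≤ (Y ω : ℝ)} ≤ ENNReal.ofReal (0.6 / 10 ^ 9) := by
    have h := rj_prob_tail Pr Y N (1/b) (1.4 * μ2) hpb0 hpb1 hY
    refine h.trans (ENNReal.ofReal_le_ofReal ?_)
    rw [hNp]
    exact rj_numeric hNb
  -- union bound on the complement
  set S : Set Ω := {ω | ((X ω : ℝ) * (Y ω : ℝ)) < 2 * M * N / t} with hSdef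
  have ht' : (t:ℝ) = (a:ℝ) * b := by rw [ht]; push_cast; ring
  have hthr : 2 * (M:ℝ) * N / t = 2 * μ1 * μ2 := by
    rw [ht', hμ1, hμ2]; field_simp
  have hcompl : Sᶜ ⊆ {ω | 1.4 * μ1 ≤ (X ω : ℝ)} ∪ {ω | 1.4 * μ2 ≤ (Y ω : ℝ)} := by
    intro ω hω
    simp only [hSdef, Set.mem_compl_iff, Set.mem_setOf_eq, not_lt] at hω
    by_contra hcon
    simp only [Set.mem_union, Set.mem_setOf_eq, not_or, not_le] at hcon
    obtain ⟨h1, h2⟩ := hcon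
    have hx0 : (0:ℝ) ≤ (X ω : ℝ) := Nat.cast_nonneg _
    have hy0 : (0:ℝ) ≤ (Y ω : ℝ) := Nat.cast_nonneg _
    rw [hthr] at hω
    nlinarith [mul_pos hμ1pos hμ2pos]
  have hScompl : Pr Sᶜ ≤ ENNReal.ofReal (1.2 / 10 ^ 9) := by
    calc Pr Sᶜ ≤ Pr ({ω | 1.4 * μ1 ≤ (X ω : ℝ)} ∪ {ω | 1.4 * μ2 ≤ (Y ω : ℝ)}) :=
          measure_mono hcompl
      _ ≤ Pr {ω | 1.4 * μ1 ≤ (X ω : ℝ)} + Pr {ω | 1.4 * μ2 ≤ (Y ω : ℝ)} := measure_union_le _ _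
      _ ≤ ENNReal.ofReal (0.6 / 10 ^ 9) + ENNReal.ofReal (0.6 / 10 ^ 9) :=
          add_le_add hXtail hYtail
      _ = ENNReal.ofReal (1.2 / 10 ^ 9) := by
          rw [← ENNReal.ofReal_add (by norm_num) (by norm_num)]; norm_num
  -- conclude
  have hone : (1 : ENNReal) ≤ Pr S + Pr Sᶜ := by
    have : Pr (S ∪ Sᶜ) ≤ Pr S + Pr Sᶜ := measure_union_le _ _
    rwa [Set.union_compl_self, measure_univ] at this
  have hkey : (1 : ENNReal) ≤ Pr S + ENNReal.ofReal (1.2 / 10 ^ 9) :=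
    hone.trans (add_le_add_right hScompl _)
  have hsplit : ENNReal.ofReal (1 - 1.2 / 10 ^ 9) + ENNReal.ofReal (1.2 / 10 ^ 9) = 1 := by
    rw [← ENNReal.ofReal_add (by norm_num) (by norm_num)]
    norm_num
  rw [ge_iff_le, ← ENNReal.add_le_add_iff_right (ENNReal.ofReal_ne_top (r := 1.2 / 10 ^ 9)),
    hsplit]
  exact hkey
end

section
/- Let M, N, j be positive integers and let W and t be positive reals (t may be taken to be a positive integer) such that N ≤ M, j ≤ M, and M·N ≤ j·W/t. Then ⌈M/j⌉ · N < 2·W/t. -/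
/-- Big-join-result bound of StatJoin: if `N ≤ M`, `j ≤ M` and `M·N ≤ j·W/t`,
then `⌈M/j⌉·N < 2·W/t`. -/
theorem statjoin_big_result (M N j : ℕ) (hM : 0 < M) (hN : 0 < N) (hj : 0 < j)
    (W t : ℝ) (hW : 0 < W) (ht : 0 < t)
    (hNM : N ≤ M) (hjM : j ≤ M)
    (hMN : (M : ℝ) * N ≤ j * W / t) :
    (⌈(M : ℝ) / j⌉ : ℝ) * N < 2 * W / t := by
  have hj' : (0:ℝ) < j := by exact_mod_cast hj
  have hN' : (0:ℝ) < N := by exact_mod_cast hN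
  have h1 : (⌈(M : ℝ) / j⌉ : ℝ) < (M:ℝ)/j + 1 := Int.ceil_lt_add_one _
  have h2 : (1:ℝ) ≤ (M:ℝ)/j := by
    rw [le_div_iff₀ hj']; exact_mod_cast by simpa using hjM
  have h3 : (⌈(M : ℝ) / j⌉ : ℝ) * N < 2 * ((M:ℝ)/j) * N := by
    apply mul_lt_mul_of_pos_right _ hN'
    nlinarith
  have h4 : 2 * ((M:ℝ)/j) * N ≤ 2 * W / t := by
    have : (M:ℝ) * N / j ≤ W / t := by
      rw [div_le_div_iff₀ hj' ht]
      calc (M:ℝ) * N * t ≤ (j * W / t) * t := by nlinarith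
        _ = W * j := by field_simp
    calc 2 * ((M:ℝ)/j) * N = 2 * ((M:ℝ) * N / j) := by ring
      _ ≤ 2 * (W / t) := by linarith
      _ = 2 * W / t := by ring
  linarith
end
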